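/- In a category with finite limits and colimits, the relation on cospans from x to y defined by f ∼ g iff there exists a span of cospans from f to g (a commuting diagram with a span between the apexes compatible with the legs) is an equivalence relation. -/

import Mathlib

open CategoryTheory CategoryTheory.Limits

universe v u

/-- A cospan from `x` to `y` in a category `C`. -/
structure Cospan (C : Type u) [Category.{v} C] (x y : C) where
  apex : C
  l : x ⟶ apex
  r : y ⟶ apex

variable {C : Type u} [Category.{v} C]

/-- The identity cospan on `x`. -/
def Cospan.id (x : C) : Cospan C x x := ⟨x, 𝟙 x, 𝟙 x⟩

/-- Composition of cospans by pushout over the shared foot. -/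
noncomputable def Cospan.comp [HasPushouts C] {x y z : C}
    (f : Cospan C x y) (g : Cospan C y z) : Cospan C x z :=
  ⟨pushout f.r g.l, f.l ≫ pushout.inl f.r g.l, g.r ≫ pushout.inr f.r g.l⟩

/-- Isomorphism of cospans: an isomorphism of apexes commuting with the legs. -/
def Cospan.Isomorphic {x y : C} (f g : Cospan C x y) : Prop :=
  ∃ e : f.apex ≅ g.apex, f.l ≫ e.hom = g.l ∧ f.r ≫ e.hom = g.r

/--  iff there exists a span of cospans from  to . -/
def SpanOfCospansRel {x y : C} (f g : Cospan C x y) : Prop :=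
  ∃ (K : C) (p : K ⟶ f.apex) (q : K ⟶ g.apex) (i : x ⟶ K) (j : y ⟶ K),
    i ≫ p = f.l ∧ i ≫ q = g.l ∧ j ≫ p = f.r ∧ j ≫ q = g.r

/-- In a category with finite limits and colimits, the relation on cospans
from  to  given by the existence of a span of cospans is an equivalence
relation. -/
theorem stmt5 [HasFiniteLimits C] [HasFiniteColimits C] (x y : C) :
    Equivalence (SpanOfCospansRel (C := C) (x := x) (y := y)) := by
  constructor
  · intro f
    exact ⟨f.apex, 𝟙 _, 𝟙 _, f.l, f.r, by simp, by simp, by simp, by simp⟩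
  · rintro f g ⟨K, p, q, i, j, h1, h2, h3, h4⟩
    exact ⟨K, q, p, i, j, h2, h1, h4, h3⟩
  · rintro f g h ⟨K, p, q, i, j, h1, h2, h3, h4⟩ ⟨L, p', q', i', j', h1', h2', h3', h4'⟩
    refine ⟨pullback q p', pullback.fst q p' ≫ p, pullback.snd q p' ≫ q',
      pullback.lift i i' (h2.trans h1'.symm),
      pullback.lift j j' (h4.trans h3'.symm), ?_, ?_, ?_, ?_⟩ <;>
      simp only [Category.assoc, pullback.lift_fst_assoc, pullback.lift_snd_assoc, h1, h2', h3, h4']
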